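/- arXiv:1704.03089 — 2 statements merged into one kernel-verified Lean document; each statement's English description precedes it below -/
import Mathlib

section
/- Let ψ:ℕ→(0,∞) be non-increasing with tψ(t)<1 for all large t. Then an irrational x∈[0,1) belongs to D(ψ) if and only if |q_{n−1}(x)·x − p_{n−1}(x)| < ψ(q_n(x)) for all sufficiently large n, where p_n(x)/q_n(x) are the continued fraction convergents of x. -/
open Filter MeasureTheory Set

/-- The set `D(ψ)` of `ψ`-Dirichlet improvable numbers, for `ψ : ℕ → ℝ`: those `x ∈ ℝ`
such that for all sufficiently large `t ∈ ℕ` the system `|qx - p| < ψ t`, `|q| < t` has a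
nontrivial integer solution `(p, q)`. -/
def DirichletSetNat (ψ : ℕ → ℝ) : Set ℝ :=
  {x | ∃ N : ℕ, ∀ t : ℕ, t > N →
    ∃ p q : ℤ, (p, q) ≠ (0, 0) ∧ |(q : ℝ) * x - p| < ψ t ∧ |(q : ℝ)| < t}

/-- The Gauss map `T(x) = 1/x mod 1`, with `T(0) = 0`. -/
noncomputable def gaussMap (x : ℝ) : ℝ := if x = 0 then 0 else Int.fract (1 / x)

/-- `cfA x n` is the `n`-th partial quotient `a_n(x)` of the continued fraction
expansion of `x ∈ [0,1)`, for `n ≥ 1`: `a_n(x) = ⌊1 / T^{n-1}(x)⌋`. -/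
noncomputable def cfA (x : ℝ) (n : ℕ) : ℕ := ⌊1 / (gaussMap^[n - 1] x)⌋₊

/-- `cfQ x n` is the denominator `q_n(x)` of the `n`-th convergent of `x`:
`q₀ = 1`, `q₁ = a₁`, `q_{n+2} = a_{n+2} q_{n+1} + q_n`. -/
noncomputable def cfQ (x : ℝ) : ℕ → ℕ
  | 0 => 1
  | 1 => cfA x 1
  | (n + 2) => cfA x (n + 2) * cfQ x (n + 1) + cfQ x n

/-- `cfP x n` is the numerator `p_n(x)` of the `n`-th convergent of `x`:
`p₀ = 0`, `p₁ = 1`, `p_{n+2} = a_{n+2} p_{n+1} + p_n`. -/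
noncomputable def cfP (x : ℝ) : ℕ → ℕ
  | 0 => 0
  | 1 => 1
  | (n + 2) => cfA x (n + 2) * cfP x (n + 1) + cfP x n

section aux
variable {x : ℝ}

lemma my_gauss_step (hirr : Irrational x) (hxI : x ∈ Ioo (0:ℝ) 1) :
    Irrational (gaussMap x) ∧ gaussMap x ∈ Ioo (0:ℝ) 1 := by
  have hx0 : x ≠ 0 := ne_of_gt hxI.1
  have h1 : Irrational (1 / x) := by
    rw [one_div]; exact irrational_inv_iff.mpr hirr
  have hg : gaussMap x = Int.fract (1 / x) := if_neg hx0
  have hirr' : Irrational (gaussMap x) := by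
    rw [hg, Int.fract]; exact Irrational.sub_intCast h1 _
  exact ⟨hirr', lt_of_le_of_ne (hg ▸ Int.fract_nonneg _) (Ne.symm hirr'.ne_zero),
    hg ▸ Int.fract_lt_one _⟩

lemma my_iter_mem (hirr : Irrational x) (hx : x ∈ Ico (0:ℝ) 1) (k : ℕ) :
    Irrational (gaussMap^[k] x) ∧ gaussMap^[k] x ∈ Ioo (0:ℝ) 1 := by
  induction k with
  | zero => exact ⟨hirr, lt_of_le_of_ne hx.1 (Ne.symm hirr.ne_zero), hx.2⟩
  | succ k ih =>
    rw [Function.iterate_succ_apply']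
    exact my_gauss_step ih.1 ih.2

lemma my_cfA_eq (k : ℕ) : cfA x (k + 1) = ⌊1 / gaussMap^[k] x⌋₊ := rfl

lemma my_cfA_pos (hirr : Irrational x) (hx : x ∈ Ico (0:ℝ) 1) (k : ℕ) :
    1 ≤ cfA x (k + 1) := by
  obtain ⟨-, h0, h1⟩ := my_iter_mem hirr hx k
  rw [my_cfA_eq]
  refine Nat.le_floor ?_
  rw [Nat.cast_one, le_div_iff₀ h0, one_mul]
  exact le_of_lt h1

lemma my_gauss_iter_succ (hirr : Irrational x) (hx : x ∈ Ico (0:ℝ) 1) (k : ℕ) :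
    gaussMap^[k+1] x = 1 / gaussMap^[k] x - (cfA x (k + 1) : ℝ) := by
  obtain ⟨-, h0, h1⟩ := my_iter_mem hirr hx k
  rw [Function.iterate_succ_apply', my_cfA_eq]
  rw [show gaussMap (gaussMap^[k] x) = Int.fract (1 / gaussMap^[k] x) from if_neg (ne_of_gt h0)]
  rw [Int.fract, natCast_floor_eq_intCast_floor (by positivity)]

/-- `D n = q_n x - p_n`. -/
noncomputable def cfD (x : ℝ) (n : ℕ) : ℝ := (cfQ x n : ℝ) * x - (cfP x n : ℝ)

lemma my_cfD_succ (hirr : Irrational x) (hx : x ∈ Ico (0:ℝ) 1) :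
    ∀ n, cfD x (n + 1) = -(gaussMap^[n+1] x) * cfD x n := by
  intro n
  induction n with
  | zero =>
    have hx0 : x ≠ 0 := hirr.ne_zero
    have h := my_gauss_iter_succ hirr hx 0
    simp only [Function.iterate_zero, id_eq] at h
    simp only [cfD, cfQ, cfP, h, Nat.cast_one, Nat.cast_zero]
    field_simp
    ring
  | succ n ih =>
    obtain ⟨-, h0, -⟩ := my_iter_mem hirr hx (n + 1)
    have h := my_gauss_iter_succ hirr hx (n + 1)
    have hrec : cfD x (n + 2) = (cfA x (n + 2) : ℝ) * cfD x (n + 1) + cfD x n := by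
      simp only [cfD, cfQ, cfP]
      push_cast
      ring
    have hg0 : gaussMap^[n+1] x ≠ 0 := ne_of_gt h0
    rw [show n + 1 + 1 = n + 2 from rfl] at h
    rw [hrec, h, ih]
    set g : ℝ := gaussMap^[n+1] x with hg_def
    field_simp
    ring

lemma my_cfD_sign (hirr : Irrational x) (hx : x ∈ Ico (0:ℝ) 1) :
    ∀ n, 0 < (-1 : ℝ)^n * cfD x n := by
  intro n
  induction n with
  | zero =>
    simp only [cfD, cfQ, cfP, pow_zero, one_mul, Nat.cast_one, Nat.cast_zero]
    have := lt_of_le_of_ne hx.1 (Ne.symm hirr.ne_zero)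
    linarith
  | succ n ih =>
    obtain ⟨-, h0, -⟩ := my_iter_mem hirr hx (n + 1)
    have h := my_cfD_succ hirr hx n
    rw [h, pow_succ]
    have : (-1 : ℝ)^n * -1 * (-(gaussMap^[n+1] x) * cfD x n)
        = gaussMap^[n+1] x * ((-1:ℝ)^n * cfD x n) := by ring
    rw [this]
    positivity

lemma my_cfD_ne (hirr : Irrational x) (hx : x ∈ Ico (0:ℝ) 1) (n : ℕ) :
    cfD x n ≠ 0 := by
  have := my_cfD_sign hirr hx n
  intro h; rw [h, mul_zero] at this; exact lt_irrefl _ this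

lemma my_cfQ_pos (hirr : Irrational x) (hx : x ∈ Ico (0:ℝ) 1) : ∀ n, 0 < cfQ x n
  | 0 => one_pos
  | 1 => my_cfA_pos hirr hx 0
  | (n + 2) => by
      have h1 := my_cfQ_pos hirr hx (n + 1)
      have h2 := my_cfA_pos hirr hx (n + 1)
      show 0 < cfA x (n + 2) * cfQ x (n + 1) + cfQ x n
      positivity

lemma my_cfQ_mono (hirr : Irrational x) (hx : x ∈ Ico (0:ℝ) 1) :
    Monotone (cfQ x) := by
  apply monotone_nat_of_le_succ
  intro n
  match n with
  | 0 => exact my_cfA_pos hirr hx 0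
  | (m + 1) =>
    show cfQ x (m + 1) ≤ cfA x (m + 2) * cfQ x (m + 1) + cfQ x m
    have := my_cfA_pos hirr hx (m + 1)
    nlinarith [my_cfQ_pos hirr hx m, my_cfQ_pos hirr hx (m+1)]

lemma my_cfQ_ge (hirr : Irrational x) (hx : x ∈ Ico (0:ℝ) 1) : ∀ n, n ≤ cfQ x n
  | 0 => Nat.zero_le _
  | 1 => my_cfA_pos hirr hx 0
  | (n + 2) => by
      have h1 := my_cfQ_ge hirr hx (n + 1)
      have h2 := my_cfQ_pos hirr hx n
      have h3 := my_cfA_pos hirr hx (n + 1)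
      show n + 2 ≤ cfA x (n + 2) * cfQ x (n + 1) + cfQ x n
      nlinarith

lemma my_det : ∀ n, (cfP x (n+1) : ℤ) * cfQ x n - (cfP x n : ℤ) * cfQ x (n+1) = (-1)^n := by
  intro n
  induction n with
  | zero => simp [cfP, cfQ]
  | succ n ih =>
    have hP : (cfP x (n+2) : ℤ) = cfA x (n+2) * cfP x (n+1) + cfP x n := by
      show ((cfA x (n + 2) * cfP x (n + 1) + cfP x n : ℕ) : ℤ) = _
      push_cast; ring
    have hQ : (cfQ x (n+2) : ℤ) = cfA x (n+2) * cfQ x (n+1) + cfQ x n := by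
      show ((cfA x (n + 2) * cfQ x (n + 1) + cfQ x n : ℕ) : ℤ) = _
      push_cast; ring
    rw [hP, hQ, pow_succ]
    linarith [ih]

set_option maxHeartbeats 1000000 in
lemma my_best (hirr : Irrational x) (hx : x ∈ Ico (0:ℝ) 1) (n : ℕ) (p q : ℤ)
    (hq : q ≠ 0) (hlt : |q| < (cfQ x (n+1) : ℤ)) :
    |cfD x n| ≤ |(q : ℝ) * x - p| := by
  set P0 : ℤ := (cfP x n : ℤ) with hP0
  set P1 : ℤ := (cfP x (n+1) : ℤ) with hP1
  set Q0 : ℤ := (cfQ x n : ℤ) with hQ0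
  set Q1 : ℤ := (cfQ x (n+1) : ℤ) with hQ1
  have hdet : P1 * Q0 - P0 * Q1 = (-1)^n := my_det n
  set e : ℤ := (-1)^n with he_def
  have he : e * e = 1 := by
    rw [he_def, ← pow_add]
    exact Even.neg_one_pow ⟨n, rfl⟩
  set a : ℤ := e * (P1 * q - Q1 * p) with ha_def
  set b : ℤ := e * (Q0 * p - P0 * q) with hb_def
  have ha : a * Q0 + b * Q1 = q := by
    rw [ha_def, hb_def]
    linear_combination (e * q) * hdet + q * he
  have hb : a * P0 + b * P1 = p := by
    rw [ha_def, hb_def]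
    linear_combination (e * p) * hdet + p * he
  have hQ0pos : (1 : ℤ) ≤ Q0 := by
    have h : 1 ≤ cfQ x n := my_cfQ_pos hirr hx n
    rw [hQ0]; exact_mod_cast h
  have hQ1pos : (1 : ℤ) ≤ Q1 := by
    have h : 1 ≤ cfQ x (n+1) := my_cfQ_pos hirr hx (n+1)
    rw [hQ1]; exact_mod_cast h
  -- real identity
  have ha' : (a : ℝ) * (cfQ x n : ℝ) + (b : ℝ) * (cfQ x (n+1) : ℝ) = (q : ℝ) := by
    exact_mod_cast congrArg (Int.cast : ℤ → ℝ) ha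
  have hb' : (a : ℝ) * (cfP x n : ℝ) + (b : ℝ) * (cfP x (n+1) : ℝ) = (p : ℝ) := by
    exact_mod_cast congrArg (Int.cast : ℤ → ℝ) hb
  have key : (q : ℝ) * x - p = (a : ℝ) * cfD x n + (b : ℝ) * cfD x (n+1) := by
    simp only [cfD]
    linear_combination hb' - x * ha'
  rcases eq_or_ne b 0 with hb0 | hb0
  · -- q = a Q0, a ≠ 0
    have haq : a * Q0 = q := by rw [← ha, hb0]; ring
    have ha0 : a ≠ 0 := by
      intro h; rw [h, zero_mul] at haq; exact hq haq.symm
    have h1 : (1 : ℝ) ≤ |(a : ℝ)| := by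
      rw [← Int.cast_abs]; exact_mod_cast Int.one_le_abs ha0
    rw [key, hb0]
    push_cast
    rw [zero_mul, add_zero, abs_mul]
    nlinarith [abs_nonneg (cfD x n)]
  · rcases eq_or_ne a 0 with ha0 | ha0
    · exfalso
      have hbq : b * Q1 = q := by rw [← ha, ha0]; ring
      have h1 : (1 : ℤ) ≤ |b| := Int.one_le_abs hb0
      have : Q1 ≤ |q| := by
        rw [← hbq, abs_mul, abs_of_nonneg (by linarith : (0:ℤ) ≤ Q1)]
        nlinarith
      omega
    · -- both nonzero: opposite signs
      have hq_eq : a * Q0 + b * Q1 = q := ha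
      have habs := abs_lt.mp hlt
      have hab : a * b < 0 := by
        rcases lt_trichotomy (a * b) 0 with h | h | h
        · exact h
        · exact absurd (mul_eq_zero.mp h) (by tauto)
        · exfalso
          rcases mul_pos_iff.mp h with ⟨ha1, hb1⟩ | ⟨ha1, hb1⟩
          · have k1 : Q0 ≤ a * Q0 := le_mul_of_one_le_left (by linarith) (by linarith)
            have k2 : Q1 ≤ b * Q1 := le_mul_of_one_le_left (by linarith) (by linarith)
            linarith [habs.2]
          · have k1 : a * Q0 ≤ -Q0 := by
              have := mul_le_mul_of_nonneg_right (by linarith : a ≤ -1) (by linarith : (0:ℤ) ≤ Q0)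
              linarith
            have k2 : b * Q1 ≤ -Q1 := by
              have := mul_le_mul_of_nonneg_right (by linarith : b ≤ -1) (by linarith : (0:ℤ) ≤ Q1)
              linarith
            linarith [habs.1]
      have hDn := my_cfD_sign hirr hx n
      have hDn1 := my_cfD_sign hirr hx (n+1)
      have hsgn : cfD x n * cfD x (n+1) < 0 := by
        have hprod : 0 < ((-1:ℝ)^n * cfD x n) * ((-1:ℝ)^(n+1) * cfD x (n+1)) :=
          mul_pos hDn hDn1
        have hee : ((-1:ℝ)^n) * ((-1:ℝ)^(n+1)) = -1 := by
          rw [← pow_add]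
          exact Odd.neg_one_pow ⟨n, by ring⟩
        have heq : ((-1:ℝ)^n * cfD x n) * ((-1:ℝ)^(n+1) * cfD x (n+1))
            = -(cfD x n * cfD x (n+1)) := by
          linear_combination (cfD x n * cfD x (n+1)) * hee
        linarith [heq ▸ hprod]
      have hab' : (a : ℝ) * b < 0 := by exact_mod_cast hab
      set u : ℝ := (a : ℝ) * cfD x n with hu_def
      set v : ℝ := (b : ℝ) * cfD x (n+1) with hv_def
      have huv : 0 < u * v := by
        have : u * v = ((a:ℝ) * b) * (cfD x n * cfD x (n+1)) := by ring
        rw [this]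
        exact mul_pos_of_neg_of_neg hab' hsgn
      have h1 : (1 : ℝ) ≤ |(a : ℝ)| := by
        rw [← Int.cast_abs]; exact_mod_cast Int.one_le_abs ha0
      have hDu : |cfD x n| ≤ |u| := by
        rw [hu_def, abs_mul]
        nlinarith [abs_nonneg (cfD x n)]
      have h2 : |u| ≤ |u + v| := by
        rcases lt_trichotomy u 0 with hu | hu | hu
        · have hv : v < 0 := by nlinarith
          rw [abs_of_neg hu, abs_of_neg (by linarith : u + v < 0)]; linarith
        · simp [hu]
        · have hv : 0 < v := by nlinarith
          rw [abs_of_pos hu, abs_of_pos (by linarith : 0 < u + v)]; linarith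
      rw [key]
      calc |cfD x n| ≤ |u| := hDu
        _ ≤ |u + v| := h2

end aux

/-- **Criterion for Dirichlet improvability via convergents.** For irrational
`x ∈ [0,1)`, `x ∈ D(ψ)` iff `|q_{n-1}(x) x - p_{n-1}(x)| < ψ(q_n(x))` for all
sufficiently large `n` (stated here with the index shift `n ↦ n + 1`). -/
theorem mem_dirichletSet_iff_convergents
    (ψ : ℕ → ℝ) (hψpos : ∀ t : ℕ, 0 < t → 0 < ψ t)
    (hψanti : ∀ m n : ℕ, 0 < m → m ≤ n → ψ n ≤ ψ m)
    (hψ1 : ∃ T : ℕ, ∀ t ≥ T, (t : ℝ) * ψ t < 1)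
    (x : ℝ) (hx : x ∈ Ico (0 : ℝ) 1) (hirr : Irrational x) :
    x ∈ DirichletSetNat ψ ↔
      ∃ N : ℕ, ∀ n ≥ N, |(cfQ x n : ℝ) * x - cfP x n| < ψ (cfQ x (n + 1)) := by
  constructor
  · rintro ⟨N', hN'⟩
    obtain ⟨T, hT⟩ := hψ1
    refine ⟨max N' T, fun n hn => ?_⟩
    set t := cfQ x (n + 1) with ht_def
    have htn : n + 1 ≤ t := my_cfQ_ge hirr hx (n + 1)
    have htN : t > N' := by
      have : N' ≤ n := le_trans (le_max_left _ _) hn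
      omega
    have htT : T ≤ t := by
      have : T ≤ n := le_trans (le_max_right _ _) hn
      omega
    have htpos : 0 < t := by omega
    have hψt1 : ψ t < 1 := by
      have h1 := hT t htT
      have h2 := hψpos t htpos
      have : (1 : ℝ) ≤ (t : ℝ) := by exact_mod_cast htpos
      nlinarith
    obtain ⟨p, q, hpq, hlt1, hlt2⟩ := hN' t htN
    have hq0 : q ≠ 0 := by
      intro h
      rw [h] at hlt1 hpq
      simp only [Int.cast_zero, zero_mul, zero_sub, abs_neg] at hlt1
      have hp0 : p ≠ 0 := by simpa [h] using hpq
      have : (1 : ℝ) ≤ |(p : ℝ)| := by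
        rw [← Int.cast_abs]; exact_mod_cast Int.one_le_abs hp0
      linarith
    have hqlt : |q| < (cfQ x (n+1) : ℤ) := by exact_mod_cast hlt2
    calc |(cfQ x n : ℝ) * x - cfP x n| = |cfD x n| := rfl
      _ ≤ |(q : ℝ) * x - p| := my_best hirr hx n p q hq0 hqlt
      _ < ψ t := hlt1
  · rintro ⟨N, hN⟩
    refine ⟨cfQ x N, fun t ht => ?_⟩
    have hex : ∃ m, t ≤ cfQ x (m + 1) := by
      refine ⟨t, ?_⟩
      have := my_cfQ_ge hirr hx (t + 1)
      omega
    set n := Nat.find hex with hn_def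
    have hn1 : t ≤ cfQ x (n + 1) := Nat.find_spec hex
    have hmin : ∀ m, m < n → cfQ x (m + 1) < t := by
      intro m hm
      have := Nat.find_min hex hm
      omega
    have hqN : 1 ≤ cfQ x N := my_cfQ_pos hirr hx N
    have ht2 : 2 ≤ t := by omega
    have hqn_lt : cfQ x n < t := by
      match n, hmin with
      | 0, _ => show cfQ x 0 < t; show 1 < t; omega
      | (m + 1), hmin => exact hmin m (Nat.lt_succ_self m)
    have hnN : N ≤ n := by
      by_contra h
      push_neg at h
      have : cfQ x (n + 1) ≤ cfQ x N := my_cfQ_mono hirr hx (by omega : n + 1 ≤ N)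
      omega
    refine ⟨(cfP x n : ℤ), (cfQ x n : ℤ), ?_, ?_, ?_⟩
    · have hpos := my_cfQ_pos hirr hx n
      simp only [ne_eq, Prod.mk.injEq, not_and]
      intro _ h
      have : cfQ x n = 0 := by exact_mod_cast h
      omega
    · have h1 := hN n hnN
      have h2 : ψ (cfQ x (n + 1)) ≤ ψ t := hψanti t (cfQ x (n+1)) (by omega) hn1
      push_cast
      linarith
    · push_cast
      rw [abs_of_nonneg (by positivity : (0:ℝ) ≤ (cfQ x n : ℝ))]
      exact_mod_cast hqn_lt
end

section
/- Let ψ:ℕ→(0,∞) be non-increasing with tψ(t)<1 for all large t, and let Ψ(t)=tψ(t)/(1−tψ(t)). Then an irrational x=[a₁,a₂,…]∈[0,1) belongs to D(ψ) if and only if [a_{n+1}, a_{n+2}, …] · [a_n, a_{n−1}, …, a₁] > 1/Ψ(q_n(x)) for all sufficiently large n, where [a_{n+1},a_{n+2},…] denotes the value of the infinite continued fraction with those partial quotients, [a_n,…,a₁] the value of the finite one, and q_n(x) the denominators of the convergents of x. -/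
open Filter MeasureTheory Set

/-- The value of the finite continued fraction `[b₁, b₂, …, b_k] = 1/(b₁ + 1/(b₂ + ⋯))`
given by a list of partial quotients; the empty list has value `0`. -/
noncomputable def finCFValue : List ℕ → ℝ
  | [] => 0
  | b :: l => 1 / (b + finCFValue l)

/-! ### Auxiliary definitions -/

/-- Shifted denominators: `qd x (n+1) = q_n(x)`, with `qd x 0 = 0`. -/
noncomputable def qd (x : ℝ) : ℕ → ℕ
  | 0 => 0
  | 1 => 1
  | (n+2) => cfA x (n+1) * qd x (n+1) + qd x n

/-- Shifted numerators: `pd x (n+1) = p_n(x)`, with `pd x 0 = 1`. -/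
noncomputable def pd (x : ℝ) : ℕ → ℤ
  | 0 => 1
  | 1 => 0
  | (n+2) => cfA x (n+1) * pd x (n+1) + pd x n

/-- Product of the first `n` Gauss-map iterates. -/
noncomputable def piT (x : ℝ) (n : ℕ) : ℝ := ∏ k ∈ Finset.range n, gaussMap^[k] x

/-! ### Basic lemmas on the Gauss map iterates -/

lemma gauss_step {y : ℝ} (h : Irrational y) (hy : y ∈ Set.Ioo (0:ℝ) 1) :
    Irrational (gaussMap y) ∧ gaussMap y ∈ Set.Ioo (0:ℝ) 1 := by
  have hne : y ≠ 0 := ne_of_gt hy.1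
  have h1 : Irrational (1/y) := by rw [one_div]; exact h.inv
  have h2 : Irrational (Int.fract (1/y)) := by unfold Int.fract; exact h1.sub_intCast _
  rw [gaussMap, if_neg hne]
  exact ⟨h2, ⟨lt_of_le_of_ne (Int.fract_nonneg _) (Ne.symm h2.ne_zero), Int.fract_lt_one _⟩⟩

lemma gauss_iter {x : ℝ} (h : Irrational x) (hx : x ∈ Set.Ioo (0:ℝ) 1) (n : ℕ) :
    Irrational (gaussMap^[n] x) ∧ gaussMap^[n] x ∈ Set.Ioo (0:ℝ) 1 := by
  induction n with
  | zero => exact ⟨h, hx⟩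
  | succ n ih => rw [Function.iterate_succ_apply']; exact gauss_step ih.1 ih.2

lemma cfA_add {x : ℝ} (h : Irrational x) (hx : x ∈ Set.Ioo (0:ℝ) 1) (n : ℕ) :
    (cfA x (n+1) : ℝ) + gaussMap^[n+1] x = 1 / gaussMap^[n] x := by
  obtain ⟨hi, h0, h1⟩ := gauss_iter h hx n
  have hne : gaussMap^[n] x ≠ 0 := ne_of_gt h0
  have hpos : 0 ≤ 1 / gaussMap^[n] x := by positivity
  rw [Function.iterate_succ_apply', gaussMap, if_neg hne]
  have : (cfA x (n+1) : ℝ) = ⌊1 / gaussMap^[n] x⌋ := by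
    rw [cfA]; simp only [Nat.add_sub_cancel]
    rw [← Int.natCast_floor_eq_floor hpos]; simp
  rw [this, Int.fract]; ring

lemma one_le_cfA {x : ℝ} (h : Irrational x) (hx : x ∈ Set.Ioo (0:ℝ) 1) (n : ℕ) :
    1 ≤ cfA x (n+1) := by
  obtain ⟨hi, h0, h1⟩ := gauss_iter h hx n
  rw [cfA]; simp only [Nat.add_sub_cancel]
  apply Nat.le_floor
  rw [le_div_iff₀ h0]; push_cast; linarith

/-! ### Lemmas on the denominators -/

lemma qd_eq_cfQ (x : ℝ) : ∀ n, cfQ x n = qd x (n+1)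
  | 0 => by simp [cfQ, qd]
  | 1 => by simp [cfQ, qd]
  | (n+2) => by
      rw [cfQ, qd, ← qd_eq_cfQ x (n+1), ← qd_eq_cfQ x n]

lemma one_le_qd {x : ℝ} (h : Irrational x) (hx : x ∈ Set.Ioo (0:ℝ) 1) :
    ∀ n, 1 ≤ qd x (n+1)
  | 0 => le_refl 1
  | (n+1) => by
      show 1 ≤ qd x (n+2)
      rw [qd]
      have h1 := one_le_qd h hx n
      have h2 := one_le_cfA h hx n
      have h3 : qd x (n+1) ≤ cfA x (n+1) * qd x (n+1) := Nat.le_mul_of_pos_left _ h2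
      omega

lemma one_le_qd' {x : ℝ} (h : Irrational x) (hx : x ∈ Set.Ioo (0:ℝ) 1)
    {n : ℕ} (hn : 1 ≤ n) : 1 ≤ qd x n := by
  cases n with
  | zero => omega
  | succ m => exact one_le_qd h hx m

lemma qd_le_succ {x : ℝ} (h : Irrational x) (hx : x ∈ Set.Ioo (0:ℝ) 1) :
    ∀ n, qd x n ≤ qd x (n+1)
  | 0 => by simp [qd]
  | (n+1) => by
      show qd x (n+1) ≤ qd x (n+2)
      rw [qd]
      have h2 := one_le_cfA h hx n
      have h3 : qd x (n+1) ≤ cfA x (n+1) * qd x (n+1) := Nat.le_mul_of_pos_left _ h2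
      omega

lemma qd_mono {x : ℝ} (h : Irrational x) (hx : x ∈ Set.Ioo (0:ℝ) 1) :
    Monotone (qd x) := monotone_nat_of_le_succ (qd_le_succ h hx)

lemma le_qd {x : ℝ} (h : Irrational x) (hx : x ∈ Set.Ioo (0:ℝ) 1) :
    ∀ n, n ≤ qd x (n+1)
  | 0 => by simp [qd]
  | 1 => one_le_qd h hx 1
  | (n+2) => by
      have h1 : n+1 ≤ qd x (n+2) := le_qd h hx (n+1)
      have h2 : 1 ≤ qd x (n+1) := one_le_qd h hx n
      have hrec : qd x (n+3) = cfA x (n+2) * qd x (n+2) + qd x (n+1) := rfl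
      have h4 : 0 < cfA x (n+2) := one_le_cfA h hx (n+1)
      have h3 : qd x (n+2) ≤ cfA x (n+2) * qd x (n+2) := Nat.le_mul_of_pos_left _ h4
      show n+2 ≤ qd x (n+3)
      omega

/-! ### The fundamental identities -/

lemma piT_pos {x : ℝ} (h : Irrational x) (hx : x ∈ Set.Ioo (0:ℝ) 1) (n : ℕ) :
    0 < piT x n :=
  Finset.prod_pos fun k _ => (gauss_iter h hx k).2.1

lemma key_mul {x : ℝ} (h : Irrational x) (hx : x ∈ Set.Ioo (0:ℝ) 1) (n : ℕ) :
    (cfA x (n+1) : ℝ) * gaussMap^[n] x = 1 - gaussMap^[n] x * gaussMap^[n+1] x := by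
  have h0 := (gauss_iter h hx n).2.1
  have := cfA_add h hx n
  field_simp at this ⊢
  nlinarith [this]

lemma dm_eq {x : ℝ} (h : Irrational x) (hx : x ∈ Set.Ioo (0:ℝ) 1) :
    ∀ n, (qd x n : ℝ) * x - (pd x n : ℝ) = (-1)^(n+1) * piT x n
  | 0 => by simp [qd, pd, piT]
  | 1 => by simp [qd, pd, piT]
  | (n+2) => by
      have ih1 := dm_eq h hx (n+1)
      have ih0 := dm_eq h hx n
      have hq : qd x (n+2) = cfA x (n+1) * qd x (n+1) + qd x n := rfl
      have hp : pd x (n+2) = cfA x (n+1) * pd x (n+1) + pd x n := rfl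
      have key := key_mul h hx n
      have hP2 : piT x (n+2) = piT x n * gaussMap^[n] x * gaussMap^[n+1] x := by
        rw [piT, Finset.prod_range_succ, Finset.prod_range_succ]; rfl
      have hP1 : piT x (n+1) = piT x n * gaussMap^[n] x := by
        rw [piT, Finset.prod_range_succ]; rfl
      rw [hq, hp, hP2]
      push_cast
      rw [hP1] at ih1
      linear_combination (cfA x (n+1):ℝ) * ih1 + ih0 + ((-1:ℝ)^n * piT x n) * key

lemma qd_prod {x : ℝ} (h : Irrational x) (hx : x ∈ Set.Ioo (0:ℝ) 1) :
    ∀ n, ((qd x (n+1) : ℝ) + (qd x n : ℝ) * gaussMap^[n] x) * piT x n = 1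
  | 0 => by simp [qd, piT]
  | (n+1) => by
      have ih := qd_prod h hx n
      have hq : qd x (n+2) = cfA x (n+1) * qd x (n+1) + qd x n := rfl
      have hP1 : piT x (n+1) = piT x n * gaussMap^[n] x := by
        rw [piT, Finset.prod_range_succ]; rfl
      have hadd := cfA_add h hx n
      have h0 := (gauss_iter h hx n).2.1
      rw [hq, hP1]
      push_cast
      have key2 : ((cfA x (n+1):ℝ) + gaussMap^[n+1] x) * gaussMap^[n] x = 1 := by
        rw [hadd]; field_simp
      linear_combination ih + ((qd x (n+1):ℝ) * piT x n) * key2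

lemma finCF_eq (x : ℝ) (hq1 : ∀ m, 1 ≤ qd x (m+1)) :
    ∀ n, finCFValue ((List.range' 1 n).reverse.map (cfA x)) = (qd x n : ℝ) / (qd x (n+1) : ℝ)
  | 0 => by simp [finCFValue, qd]
  | (n+1) => by
      have ih := finCF_eq x hq1 n
      have hcat : List.range' 1 (n+1) = List.range' 1 n ++ [1+n] := by
        simpa using List.range'_concat (step := 1) (s := 1) (n := n)
      rw [hcat]
      simp only [List.reverse_append, List.reverse_cons, List.reverse_nil, List.nil_append,
        List.singleton_append, List.map_cons]
      rw [finCFValue, ih]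
      have h1 : (0:ℝ) < qd x (n+1) := by exact_mod_cast hq1 n
      have h2 : (0:ℝ) < qd x (n+2) := by exact_mod_cast hq1 (n+1)
      have hq : qd x (n+2) = cfA x (n+1) * qd x (n+1) + qd x n := rfl
      have hA : cfA x (1+n) = cfA x (n+1) := by rw [Nat.add_comm]
      rw [hA]
      rw [hq]
      push_cast
      have e : (cfA x (n+1):ℝ) + (qd x n : ℝ)/(qd x (n+1) : ℝ) =
          ((cfA x (n+1) : ℝ) * (qd x (n+1) : ℝ) + (qd x n : ℝ))/(qd x (n+1) : ℝ) := by
        field_simp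
      rw [e, one_div_div]

lemma det_eq (x : ℝ) : ∀ n, pd x (n+1) * (qd x n : ℤ) - pd x n * (qd x (n+1) : ℤ) = (-1)^(n+1)
  | 0 => by simp [qd, pd]
  | (n+1) => by
      have ih := det_eq x n
      have hq : qd x (n+2) = cfA x (n+1) * qd x (n+1) + qd x n := rfl
      have hp : pd x (n+2) = cfA x (n+1) * pd x (n+1) + pd x n := rfl
      rw [hq, hp]
      push_cast
      linear_combination (-1 : ℤ) * ih

/-! ### The best approximation theorem -/

lemma best_approx {x : ℝ} (h : Irrational x) (hx : x ∈ Set.Ioo (0:ℝ) 1)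
    (n : ℕ) (hn : 1 ≤ n) (p q : ℤ) (hq1 : 1 ≤ q) (hq2 : q < (qd x (n+1) : ℤ)) :
    piT x n ≤ |(q:ℝ) * x - (p:ℝ)| := by
  set ε : ℤ := (-1)^(n+1) with hε
  have hee : ε * ε = 1 := by
    rw [hε, ← pow_add]
    exact Even.neg_one_pow ⟨n+1, by ring⟩
  have hdet : pd x (n+1) * (qd x n : ℤ) - pd x n * (qd x (n+1) : ℤ) = ε := det_eq x n
  set α : ℤ := ε * (p * (qd x n : ℤ) - q * pd x n) with hα
  set β : ℤ := ε * (q * pd x (n+1) - p * (qd x (n+1) : ℤ)) with hβ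
  have hp : α * pd x (n+1) + β * pd x n = p := by
    rw [hα, hβ]; linear_combination (ε * p) * hdet + p * hee
  have hq : α * (qd x (n+1) : ℤ) + β * (qd x n : ℤ) = q := by
    rw [hα, hβ]; linear_combination (ε * q) * hdet + q * hee
  have hQ1 : (1:ℤ) ≤ (qd x (n+1) : ℤ) := by exact_mod_cast one_le_qd h hx n
  have hQ0 : (1:ℤ) ≤ (qd x n : ℤ) := by exact_mod_cast one_le_qd' h hx hn
  have hβ0 : β ≠ 0 := by
    intro h0
    rw [h0, zero_mul, add_zero] at hq
    rcases le_or_gt α 0 with ha | ha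
    · nlinarith
    · have h5 : (qd x (n+1):ℤ) ≤ α * qd x (n+1) :=
        le_mul_of_one_le_left (by linarith) (by omega)
      omega
  have hab : α * β ≤ 0 := by
    by_contra hab
    push_neg at hab
    rcases mul_pos_iff.mp hab with ⟨ha, hb⟩ | ⟨ha, hb⟩
    · have h5 : (qd x (n+1):ℤ) ≤ α * qd x (n+1) :=
        le_mul_of_one_le_left (by linarith) (by omega)
      have h6 : (qd x n:ℤ) ≤ β * qd x n :=
        le_mul_of_one_le_left (by linarith) (by omega)
      omega
    · have h5 : α * qd x (n+1) ≤ -qd x (n+1) := by nlinarith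
      have h6 : β * qd x n ≤ -qd x n := by nlinarith
      omega
  have hpR : (α:ℝ) * (pd x (n+1):ℝ) + (β:ℝ) * (pd x n : ℝ) = (p:ℝ) := by exact_mod_cast hp
  have hqR : (α:ℝ) * ((qd x (n+1):ℕ):ℝ) + (β:ℝ) * ((qd x n:ℕ):ℝ) = (q:ℝ) := by
    exact_mod_cast hq
  have hD1 := dm_eq h hx (n+1)
  have hD0 := dm_eq h hx n
  have hsplit : (q:ℝ)*x - p =
      (α:ℝ) * ((qd x (n+1):ℝ)*x - pd x (n+1)) + (β:ℝ) * ((qd x n:ℝ)*x - pd x n) := by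
    linear_combination hpR - x * hqR
  have hPn := piT_pos h hx n
  have hPn1 := piT_pos h hx (n+1)
  have hsign : ((-1:ℝ)^(n+1+1) * piT x (n+1)) * ((-1:ℝ)^(n+1) * piT x n) ≤ 0 := by
    have hodd : ((-1:ℝ)^(n+1+1)) * ((-1)^(n+1)) = -1 := by
      rw [← pow_add]; exact Odd.neg_one_pow ⟨n+1, by ring⟩
    have e : ((-1:ℝ)^(n+1+1) * piT x (n+1)) * ((-1:ℝ)^(n+1) * piT x n)
        = -(piT x (n+1) * piT x n) := by
      linear_combination (piT x (n+1) * piT x n) * hodd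
    rw [e]
    nlinarith [mul_pos hPn1 hPn]
  have habR : (α:ℝ) * (β:ℝ) ≤ 0 := by exact_mod_cast hab
  set a := (α:ℝ) * ((qd x (n+1):ℝ)*x - pd x (n+1)) with ha
  set b := (β:ℝ) * ((qd x n:ℝ)*x - pd x n) with hb
  have h2 : 0 ≤ a * b := by
    rw [ha, hb, hD1, hD0]
    nlinarith [mul_nonneg (neg_nonneg.2 habR) (neg_nonneg.2 hsign)]
  have h3 : |b| ≤ |a + b| := by
    rw [← Real.sqrt_sq_eq_abs, ← Real.sqrt_sq_eq_abs]
    exact Real.sqrt_le_sqrt (by nlinarith)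
  have h4 : piT x n ≤ |b| := by
    rw [hb, hD0, abs_mul, abs_mul, abs_pow, abs_neg, abs_one, one_pow, one_mul,
      abs_of_pos hPn]
    have hb1 : (1:ℝ) ≤ |(β:ℝ)| := by
      have h5 := Int.one_le_abs hβ0
      calc (1:ℝ) ≤ ((|β| : ℤ) : ℝ) := by exact_mod_cast h5
        _ = |(β:ℝ)| := by push_cast; rfl
    nlinarith
  rw [hsplit]
  exact le_trans h4 h3

/-! ### The main theorem -/

/-- **Criterion for Dirichlet improvability via the Gauss map.** For irrational
`x = [a₁, a₂, …] ∈ [0,1)`, one has `x ∈ D(ψ)` iff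
`[a_{n+1}, a_{n+2}, …] · [a_n, a_{n-1}, …, a₁] > 1/Ψ(q_n(x))` for all sufficiently
large `n`, where `[a_{n+1}, a_{n+2}, …] = T^[n] x` is the value of the infinite
continued fraction of the tail and `[a_n, …, a₁]` is the value of the finite one. -/
theorem mem_dirichletSet_iff_gaussMap_prod
    (ψ : ℕ → ℝ) (hψpos : ∀ t : ℕ, 0 < t → 0 < ψ t)
    (hψanti : ∀ m n : ℕ, 0 < m → m ≤ n → ψ n ≤ ψ m)
    (hψ1 : ∃ T : ℕ, ∀ t ≥ T, (t : ℝ) * ψ t < 1)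
    (Ψ : ℕ → ℝ) (hΨ : ∀ t : ℕ, Ψ t = t * ψ t / (1 - t * ψ t))
    (x : ℝ) (hx : x ∈ Ico (0 : ℝ) 1) (hirr : Irrational x) :
    x ∈ DirichletSetNat ψ ↔
      ∃ N : ℕ, ∀ n ≥ N, 0 < n →
        1 / Ψ (cfQ x n) <
          (gaussMap^[n] x) * finCFValue ((List.range' 1 n).reverse.map (cfA x)) := by
  obtain ⟨T, hT⟩ := hψ1
  have hx' : x ∈ Set.Ioo (0:ℝ) 1 := ⟨lt_of_le_of_ne hx.1 (Ne.symm hirr.ne_zero), hx.2⟩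
  have hconv : ∀ n : ℕ, 1 ≤ n → T ≤ qd x (n+1) →
      (piT x n < ψ (qd x (n+1)) ↔
        1 / Ψ (cfQ x n) < gaussMap^[n] x * finCFValue ((List.range' 1 n).reverse.map (cfA x))) := by
    intro n hn hTn
    have hid := qd_prod hirr hx' n
    have hQ1R : (1:ℝ) ≤ (qd x (n+1) : ℝ) := by exact_mod_cast one_le_qd hirr hx' n
    have hQ0R : (1:ℝ) ≤ (qd x n : ℝ) := by exact_mod_cast one_le_qd' hirr hx' hn
    have hs := (gauss_iter hirr hx' n).2
    have hP := piT_pos hirr hx' n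
    have hc : 0 < ψ (qd x (n+1)) := hψpos _ (one_le_qd hirr hx' n)
    have hc1 : ((qd x (n+1) : ℕ) : ℝ) * ψ (qd x (n+1)) < 1 := hT _ hTn
    rw [qd_eq_cfQ, hΨ, finCF_eq x (fun m => one_le_qd hirr hx' m) n, one_div_div]
    set Q1 := ((qd x (n+1) : ℕ) : ℝ) with hQ1d
    set Q0 := ((qd x n : ℕ) : ℝ) with hQ0d
    set s := gaussMap^[n] x with hsd
    set c := ψ (qd x (n+1)) with hcd
    have hsum : 0 < Q1 + Q0 * s := by nlinarith [hs.1]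
    have hQc : 0 < Q1 * c := by nlinarith
    rw [div_lt_iff₀ hQc]
    have he : s * (Q0 / Q1) * (Q1 * c) = s * Q0 * c := by field_simp
    rw [he]
    constructor
    · intro hlt
      nlinarith [mul_pos (sub_pos.2 hlt) hsum]
    · intro hlt
      nlinarith [hsum, hP, hid, mul_pos hsum hP]
  constructor
  · rintro ⟨N, hN⟩
    refine ⟨N + T + 1, ?_⟩
    intro n hn _
    have hn1 : 1 ≤ n := by omega
    have hQT : T ≤ qd x (n+1) := le_trans (by omega) (le_qd hirr hx' n)
    have hQN : qd x (n+1) > N := lt_of_lt_of_le (by omega) (le_qd hirr hx' n)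
    obtain ⟨p, q, hpq0, hlt, hqlt⟩ := hN (qd x (n+1)) hQN
    rw [← hconv n hn1 hQT]
    -- show piT x n < ψ (qd x (n+1))
    rcases lt_trichotomy q 0 with hq | hq | hq
    · -- q < 0 : use (-p, -q)
      have hq1 : (1:ℤ) ≤ -q := by omega
      have hq2 : -q < (qd x (n+1) : ℤ) := by
        have h1 : |(q:ℝ)| < ((qd x (n+1) : ℕ) : ℝ) := hqlt
        have h2 : ((-q : ℤ) : ℝ) ≤ |(q:ℝ)| := by
          rw [← abs_neg]; push_cast; exact le_abs_self _
        exact_mod_cast lt_of_le_of_lt h2 h1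
      have hba := best_approx hirr hx' n hn1 (-p) (-q) hq1 hq2
      have heq : |((-q : ℤ):ℝ) * x - ((-p : ℤ):ℝ)| = |(q:ℝ) * x - (p:ℝ)| := by
        push_cast
        rw [← abs_neg]
        ring_nf
      rw [heq] at hba
      exact lt_of_le_of_lt hba hlt
    · -- q = 0 : contradiction
      exfalso
      subst hq
      have hp0 : p ≠ 0 := by
        intro hp0
        exact hpq0 (by rw [hp0])
      have h1 : (1:ℝ) ≤ |(p:ℝ)| := by
        have := Int.one_le_abs hp0
        calc (1:ℝ) ≤ ((|p| : ℤ) : ℝ) := by exact_mod_cast this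
          _ = |(p:ℝ)| := by push_cast; rfl
      have h2 : |(0:ℝ) * x - (p:ℝ)| = |(p:ℝ)| := by
        rw [zero_mul, zero_sub, abs_neg]
      simp only [Int.cast_zero] at hlt
      rw [h2] at hlt
      have hψlt1 : ψ (qd x (n+1)) < 1 := by
        have hc1 : ((qd x (n+1) : ℕ) : ℝ) * ψ (qd x (n+1)) < 1 := hT _ hQT
        have hQ1R : (1:ℝ) ≤ ((qd x (n+1) : ℕ) : ℝ) := by
          exact_mod_cast one_le_qd hirr hx' n
        have hc : 0 < ψ (qd x (n+1)) := hψpos _ (one_le_qd hirr hx' n)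
        nlinarith
      linarith
    · -- q > 0
      have hq1 : (1:ℤ) ≤ q := by omega
      have hq2 : q < (qd x (n+1) : ℤ) := by
        have h1 : |(q:ℝ)| < ((qd x (n+1) : ℕ) : ℝ) := hqlt
        have h2 : ((q : ℤ) : ℝ) ≤ |(q:ℝ)| := le_abs_self _
        exact_mod_cast lt_of_le_of_lt h2 h1
      have hba := best_approx hirr hx' n hn1 p q hq1 hq2
      exact lt_of_le_of_lt hba hlt
  · rintro ⟨N, hN⟩
    refine ⟨qd x (N+2) + T + 2, ?_⟩
    intro t ht
    set n := Nat.findGreatest (fun m => qd x m < t) t with hnd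
    have h1t : qd x 1 < t := by
      have : qd x 1 = 1 := rfl
      omega
    have hn1 : 1 ≤ n := Nat.le_findGreatest (by omega) h1t
    have hfg : qd x n < t := Nat.findGreatest_spec (P := fun m => qd x m < t) (m := 1) (by omega) h1t
    have hub : t ≤ qd x (n+1) := by
      rcases le_or_gt (n+1) t with hc | hc
      · by_contra hcon
        push_neg at hcon
        exact Nat.findGreatest_is_greatest (lt_add_one n) hc hcon
      · have hnt : n ≤ t := Nat.findGreatest_le t
        have hnn : n = t := by omega
        calc t ≤ qd x (t+1) := le_qd hirr hx' t
          _ = qd x (n+1) := by rw [hnn]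
    have hNn : N ≤ n := by
      by_contra hcon
      push_neg at hcon
      have : qd x (n+1) ≤ qd x (N+2) := qd_mono hirr hx' (by omega)
      omega
    have hTQ : T ≤ qd x (n+1) := by omega
    have hP : piT x n < ψ (qd x (n+1)) :=
      (hconv n hn1 hTQ).mpr (hN n hNn (by omega))
    refine ⟨pd x n, (qd x n : ℤ), ?_, ?_, ?_⟩
    · have h5 : 1 ≤ qd x n := one_le_qd' hirr hx' hn1
      simp only [ne_eq, Prod.mk.injEq, not_and]
      intro _
      exact_mod_cast Nat.one_le_iff_ne_zero.mp h5
    · have hdm := dm_eq hirr hx' n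
      push_cast
      rw [hdm, abs_mul, abs_pow, abs_neg, abs_one, one_pow, one_mul,
        abs_of_pos (piT_pos hirr hx' n)]
      calc piT x n < ψ (qd x (n+1)) := hP
        _ ≤ ψ t := hψanti t _ (by omega) hub
    · push_cast
      rw [abs_of_nonneg (by positivity)]
      exact_mod_cast hfg
end
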